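/- Let R be a commutative ring of characteristic 0 with fraction field K, let m ≥ 2 be an integer, and let φ(x) = x^m · Σ_{k≥0} b_k x^k ∈ R[[x]] with b_0 = 1, all b_k ∈ R, and suppose that k!·b_k ∈ mR for all 1 ≤ k < m. Then the Böttcher coordinate f_φ(x) and its compositional inverse f_φ^{-1}(x) are both of the form x · Σ_{k≥0} (a_k/k!) x^k with a_0 = 1 and a_k ∈ R for all k. -/

import Mathlib

open PowerSeries Finset

section BottcherAux

variable {K : Type*} [CommRing K]

lemma baux_fact_mul_mem (S : Subring K) {A B : PowerSeries K} {N : ℕ}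
    (hA : ∀ j ≤ N, (Nat.factorial j : K) * PowerSeries.coeff j A ∈ S)
    (hB : ∀ j ≤ N, (Nat.factorial j : K) * PowerSeries.coeff j B ∈ S) :
    ∀ j ≤ N, (Nat.factorial j : K) * PowerSeries.coeff j (A * B) ∈ S := by
  intro j hj
  rw [coeff_mul, mul_sum]
  refine Subring.sum_mem _ fun p hp => ?_
  rw [HasAntidiagonal.mem_antidiagonal] at hp
  have h1 : p.1 ≤ j := by omega
  have hfacn : Nat.factorial j = j.choose p.1 * Nat.factorial p.1 * Nat.factorial p.2 := by
    rw [show p.2 = j - p.1 by omega]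
    exact (Nat.choose_mul_factorial_mul_factorial h1).symm
  have hfac : (Nat.factorial j : K) =
      (j.choose p.1 : K) * (Nat.factorial p.1 : K) * (Nat.factorial p.2 : K) := by
    rw [hfacn]; push_cast; ring
  have : (Nat.factorial j : K) * (coeff p.1 A * coeff p.2 B) =
      (j.choose p.1 : K) * ((Nat.factorial p.1 : K) * coeff p.1 A *
        ((Nat.factorial p.2 : K) * coeff p.2 B)) := by
    rw [hfac]; ring
  rw [this]
  exact Subring.mul_mem _ (natCast_mem S _)
    (Subring.mul_mem _ (hA p.1 (le_trans h1 hj)) (hB p.2 (le_trans (by omega) hj)))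

lemma baux_fact_pow_mem (S : Subring K) {A : PowerSeries K} {N : ℕ}
    (hA : ∀ j ≤ N, (Nat.factorial j : K) * PowerSeries.coeff j A ∈ S) (M : ℕ) :
    ∀ j ≤ N, (Nat.factorial j : K) * PowerSeries.coeff j (A ^ M) ∈ S := by
  induction M with
  | zero =>
    intro j hj
    rw [pow_zero]
    rcases Nat.eq_zero_or_pos j with rfl | hjpos
    · simpa using Subring.one_mem S
    · rw [show ((1 : PowerSeries K) = PowerSeries.C (1 : K)) by simp, coeff_C,
        if_neg (by omega)]
      simpa using Subring.zero_mem S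
  | succ M ihM =>
    rw [pow_succ]
    exact baux_fact_mul_mem S ihM hA

lemma baux_coeff_mul_congr {A A' B B' : PowerSeries K} {N : ℕ}
    (hA : ∀ j ≤ N, PowerSeries.coeff j A = PowerSeries.coeff j A')
    (hB : ∀ j ≤ N, PowerSeries.coeff j B = PowerSeries.coeff j B') :
    ∀ j ≤ N, PowerSeries.coeff j (A * B) = PowerSeries.coeff j (A' * B') := by
  intro j hj
  rw [coeff_mul, coeff_mul]
  refine Finset.sum_congr rfl fun p hp => ?_
  rw [HasAntidiagonal.mem_antidiagonal] at hp
  rw [hA p.1 (by omega), hB p.2 (by omega)]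

lemma baux_coeff_pow_congr {A A' : PowerSeries K} {N : ℕ}
    (hA : ∀ j ≤ N, PowerSeries.coeff j A = PowerSeries.coeff j A') (M : ℕ) :
    ∀ j ≤ N, PowerSeries.coeff j (A ^ M) = PowerSeries.coeff j (A' ^ M) := by
  induction M with
  | zero => intro j hj; rw [pow_zero, pow_zero]
  | succ M ihM =>
    rw [pow_succ, pow_succ]
    exact baux_coeff_mul_congr ihM hA

lemma baux_coeff_mul_eq_zero {E Z : PowerSeries K} {n : ℕ}
    (hE : ∀ a ≤ n, PowerSeries.coeff a E = 0) :
    PowerSeries.coeff n (E * Z) = 0 := by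
  rw [coeff_mul]
  refine Finset.sum_eq_zero fun p hp => ?_
  rw [HasAntidiagonal.mem_antidiagonal] at hp
  rw [hE p.1 (by omega), zero_mul]

lemma baux_coeff_sq_small {e : PowerSeries K} {n : ℕ} (hn : 1 ≤ n)
    (he : ∀ a < n, PowerSeries.coeff a e = 0) :
    ∀ a ≤ n, PowerSeries.coeff a (e * e) = 0 := by
  intro a ha
  rw [coeff_mul]
  refine Finset.sum_eq_zero fun p hp => ?_
  rw [HasAntidiagonal.mem_antidiagonal] at hp
  by_cases h : p.1 < n
  · rw [he p.1 h, zero_mul]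
  · rw [he p.2 (by omega), mul_zero]


lemma baux_coeff_mul_natCast (x : PowerSeries K) (c n : ℕ) :
    PowerSeries.coeff n (x * (c : PowerSeries K)) = (c : K) * PowerSeries.coeff n x := by
  rw [← map_natCast (PowerSeries.C (R := K)) c, mul_comm, coeff_C_mul]

/-- Splitting off the top coefficient: `coeff n (A^M) = M·A₀^(M-1)·Aₙ + coeff n (Ā^M)` where
`Ā` is the truncation of `A` below degree `n`. -/
lemma baux_coeff_pow_split (A : PowerSeries K) {n M : ℕ} (hn : 1 ≤ n) (hM : 1 ≤ M) :
    PowerSeries.coeff n (A ^ M) =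
      (M : K) * (PowerSeries.coeff 0 A) ^ (M - 1) * PowerSeries.coeff n A
        + PowerSeries.coeff n
            ((PowerSeries.mk fun j => if j < n then PowerSeries.coeff j A else 0) ^ M) := by
  obtain ⟨M', rfl⟩ : ∃ M', M = M' + 1 := ⟨M - 1, by omega⟩
  set B : PowerSeries K := PowerSeries.mk fun j => if j < n then PowerSeries.coeff j A else 0
    with hBdef
  set e : PowerSeries K := A - B with hedef
  have he_low : ∀ a < n, PowerSeries.coeff a e = 0 := by
    intro a ha
    rw [hedef, map_sub, hBdef, coeff_mk, if_pos ha, sub_self]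
  have he_n : PowerSeries.coeff n e = PowerSeries.coeff n A := by
    rw [hedef, map_sub, hBdef, coeff_mk, if_neg (lt_irrefl n), sub_zero]
  have hB0 : PowerSeries.coeff 0 B = PowerSeries.coeff 0 A := by
    rw [hBdef, coeff_mk, if_pos (by omega)]
  have heq : A = B + e := by rw [hedef]; ring
  conv_lhs => rw [heq]
  rw [add_pow, map_sum, Finset.sum_range_succ, Finset.sum_range_succ]
  have hzero : ∀ i ∈ Finset.range M',
      PowerSeries.coeff n (B ^ i * e ^ (M' + 1 - i) * (((M' + 1).choose i : ℕ) : PowerSeries K))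
        = 0 := by
    intro i hi
    rw [Finset.mem_range] at hi
    have hrw : B ^ i * e ^ (M' + 1 - i) = (e * e) * (B ^ i * e ^ (M' - 1 - i)) := by
      rw [show M' + 1 - i = (M' - 1 - i) + 2 by omega]
      ring
    rw [baux_coeff_mul_natCast, hrw,
      baux_coeff_mul_eq_zero (baux_coeff_sq_small hn he_low), mul_zero]
  rw [Finset.sum_eq_zero hzero, zero_add]
  have hBMe : PowerSeries.coeff n (B ^ M' * e) =
      (PowerSeries.coeff 0 A) ^ M' * PowerSeries.coeff n A := by
    rw [coeff_mul, Finset.sum_eq_single (0, n)]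
    · have h0 : PowerSeries.coeff 0 (B ^ M') = (PowerSeries.coeff 0 B) ^ M' := by
        simp only [coeff_zero_eq_constantCoeff, map_pow]
      rw [h0, hB0, he_n]
    · rintro ⟨a, b⟩ hab hne
      rw [HasAntidiagonal.mem_antidiagonal] at hab
      have hb : b < n := by
        rcases Nat.eq_zero_or_pos a with rfl | ha
        · exact absurd (by omega : b = n) (fun h => hne (by simp [h]))
        · omega
      rw [he_low b hb, mul_zero]
    · intro h
      exact absurd (HasAntidiagonal.mem_antidiagonal.2 (by simp)) h
  have hterm1 : PowerSeries.coeff n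
      (B ^ M' * e ^ (M' + 1 - M') * (((M' + 1).choose M' : ℕ) : PowerSeries K)) =
      ((M' + 1 : ℕ) : K) * ((PowerSeries.coeff 0 A) ^ M' * PowerSeries.coeff n A) := by
    rw [baux_coeff_mul_natCast, Nat.choose_succ_self_right,
      show M' + 1 - M' = 1 by omega, pow_one, hBMe]
  have hterm2 : PowerSeries.coeff n
      (B ^ (M' + 1) * e ^ (M' + 1 - (M' + 1)) * (((M' + 1).choose (M' + 1) : ℕ) : PowerSeries K))
      = PowerSeries.coeff n (B ^ (M' + 1)) := by
    rw [Nat.sub_self, pow_zero, Nat.choose_self, mul_one, Nat.cast_one, mul_one]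
  rw [hterm1, hterm2, show M' + 1 - 1 = M' by omega]
  push_cast
  ring

/-- Derivative trick: the `n`-th coefficient of an `M`-th power picks up a factor `M`,
with controlled denominators. -/
lemma baux_fact_coeff_pow_div (S : Subring K) {A : PowerSeries K}
    (hA : ∀ j, (Nat.factorial j : K) * PowerSeries.coeff j A ∈ S) (M : ℕ) {n : ℕ}
    (hn : 1 ≤ n) :
    ∃ s ∈ S, (Nat.factorial n : K) * PowerSeries.coeff n (A ^ M) = (M : K) * s := by
  have hDA : ∀ j, (Nat.factorial j : K) * PowerSeries.coeff j (d⁄dX K A) ∈ S := by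
    intro j
    rw [coeff_derivative]
    have : (Nat.factorial j : K) * (PowerSeries.coeff (j + 1) A * (j + 1 : K)) =
        (Nat.factorial (j + 1) : K) * PowerSeries.coeff (j + 1) A := by
      rw [Nat.factorial_succ]; push_cast; ring
    rw [this]
    exact hA (j + 1)
  refine ⟨(Nat.factorial (n - 1) : K) * PowerSeries.coeff (n - 1) (A ^ (M - 1) * d⁄dX K A),
    baux_fact_mul_mem S (baux_fact_pow_mem S (fun j _ => hA j) (M - 1))
      (fun j _ => hDA j) (n - 1) le_rfl, ?_⟩
  have hder : d⁄dX K (A ^ M) = (M : ℕ) • (A ^ (M - 1) * d⁄dX K A) := by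
    rw [Derivation.leibniz_pow, smul_eq_mul]
  have hcoeff : PowerSeries.coeff (n - 1) (d⁄dX K (A ^ M)) =
      PowerSeries.coeff n (A ^ M) * (n : K) := by
    rw [show n = (n - 1) + 1 by omega] at *
    rw [coeff_derivative]
    push_cast
    ring
  have hsm : PowerSeries.coeff (n - 1) ((M : ℕ) • (A ^ (M - 1) * d⁄dX K A)) =
      (M : K) * PowerSeries.coeff (n - 1) (A ^ (M - 1) * d⁄dX K A) := by
    rw [map_nsmul, nsmul_eq_mul]
  have key : PowerSeries.coeff n (A ^ M) * (n : K) =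
      (M : K) * PowerSeries.coeff (n - 1) (A ^ (M - 1) * d⁄dX K A) := by
    rw [← hcoeff, hder, hsm]
  have hfac : (Nat.factorial n : K) = (Nat.factorial (n - 1) : K) * (n : K) := by
    rw [show n = (n - 1) + 1 by omega, Nat.factorial_succ]
    push_cast
    ring
  calc (Nat.factorial n : K) * PowerSeries.coeff n (A ^ M)
      = (Nat.factorial (n - 1) : K) * (PowerSeries.coeff n (A ^ M) * (n : K)) := by
        rw [hfac]; ring
    _ = (Nat.factorial (n - 1) : K) *
        ((M : K) * PowerSeries.coeff (n - 1) (A ^ (M - 1) * d⁄dX K A)) := by rw [key]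
    _ = (M : K) * ((Nat.factorial (n - 1) : K) *
        PowerSeries.coeff (n - 1) (A ^ (M - 1) * d⁄dX K A)) := by ring

end BottcherAux

/-- Composition `f(g(x))` of formal power series, intended for `g` with zero
constant coefficient. -/
noncomputable def PowerSeries.comp {K : Type*} [CommSemiring K] (f g : PowerSeries K) :
    PowerSeries K :=
  PowerSeries.mk fun n =>
    PowerSeries.coeff n
      (∑ k ∈ Finset.range (n + 1), PowerSeries.C (PowerSeries.coeff k f) * g ^ k)

section Main

open PowerSeries Finset

lemma baux_coeff_comp {K : Type*} [CommSemiring K] (f g : PowerSeries K) (N : ℕ) :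
    PowerSeries.coeff N (f.comp g) =
      ∑ k ∈ Finset.range (N + 1),
        PowerSeries.coeff k f * PowerSeries.coeff N (g ^ k) := by
  rw [PowerSeries.comp, coeff_mk, map_sum]
  exact Finset.sum_congr rfl fun k _ => PowerSeries.coeff_C_mul ..

/-- For `φ = x^m ∑ b_k x^k ∈ R[[x]]` with `b_0 = 1` and
`k!·b_k ∈ mR` for `1 ≤ k < m`, the Böttcher coordinate and its compositional
inverse have the form `x ∑ (a_k/k!) x^k` with `a_0 = 1` and all `a_k ∈ R`. -/
theorem bottcher_denominator_bound_of_divisible {R K : Type*} [CommRing R] [CharZero R]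
    [Field K] [Algebra R K] [IsFractionRing R K]
    (m : ℕ) (hm : 2 ≤ m)
    (φ : PowerSeries R) (hφlow : ∀ k < m, PowerSeries.coeff k φ = 0)
    (hφlead : PowerSeries.coeff m φ = 1)
    (hφdiv : ∀ k, 1 ≤ k → k < m →
      ∃ c : R, (Nat.factorial k : R) * PowerSeries.coeff (m + k) φ = (m : R) * c)
    (f : PowerSeries K) (hf0 : PowerSeries.coeff 0 f = 0)
    (hf1 : PowerSeries.coeff 1 f = 1)
    (hfB : (φ.map (algebraMap R K)).comp f = f.comp (PowerSeries.X ^ m))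
    (g : PowerSeries K) (hg0 : PowerSeries.coeff 0 g = 0)
    (hg1 : PowerSeries.coeff 1 g = 1)
    (hginv : f.comp g = PowerSeries.X) :
    (∃ a : ℕ → R, a 0 = 1 ∧ ∀ k,
        PowerSeries.coeff (k + 1) f = algebraMap R K (a k) / (Nat.factorial k : K)) ∧
      (∃ a : ℕ → R, a 0 = 1 ∧ ∀ k,
        PowerSeries.coeff (k + 1) g = algebraMap R K (a k) / (Nat.factorial k : K)) := by
  classical
  have hinj : Function.Injective (algebraMap R K) := IsFractionRing.injective R K
  have hKchar : CharZero K := charZero_of_injective_algebraMap hinj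
  set S : Subring K := (algebraMap R K).range with hSdef
  have hmK : (m : K) ≠ 0 := Nat.cast_ne_zero.mpr (by omega)
  -- the shifted series v and z with f = X·v, g = X·z
  set v : PowerSeries K := PowerSeries.mk fun j => PowerSeries.coeff (j + 1) f with hvdef
  set z : PowerSeries K := PowerSeries.mk fun j => PowerSeries.coeff (j + 1) g with hzdef
  have hfv : f = PowerSeries.X * v := by
    ext j
    cases j with
    | zero => rw [PowerSeries.coeff_zero_X_mul, hf0]
    | succ j => rw [PowerSeries.coeff_succ_X_mul, hvdef, coeff_mk]
  have hgz : g = PowerSeries.X * z := by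
    ext j
    cases j with
    | zero => rw [PowerSeries.coeff_zero_X_mul, hg0]
    | succ j => rw [PowerSeries.coeff_succ_X_mul, hzdef, coeff_mk]
  have hv0 : PowerSeries.coeff 0 v = 1 := by rw [hvdef, coeff_mk]; exact hf1
  have hz0 : PowerSeries.coeff 0 z = 1 := by rw [hzdef, coeff_mk]; exact hg1
  have hpowc : ∀ (w u : PowerSeries K), w = PowerSeries.X * u → ∀ (N t k : ℕ), t + k = N →
      PowerSeries.coeff N (w ^ k) = PowerSeries.coeff t (u ^ k) := by
    intro w u hw N t k h
    rw [hw, mul_pow, ← h]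
    exact PowerSeries.coeff_X_pow_mul (u ^ k) k t
  -- Main induction for f (i.e. v).
  have HV : ∀ n, (Nat.factorial n : K) * PowerSeries.coeff n v ∈ S := by
    intro n
    induction n using Nat.strong_induction_on with
    | _ n ih =>
    rcases Nat.eq_zero_or_pos n with rfl | hn
    · rw [hv0, Nat.factorial_zero]
      simpa using Subring.one_mem S
    -- truncation below degree n
    set vb : PowerSeries K :=
      PowerSeries.mk fun j => if j < n then PowerSeries.coeff j v else 0 with hvbdef
    have hvb : ∀ j, (Nat.factorial j : K) * PowerSeries.coeff j vb ∈ S := by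
      intro j
      rw [hvbdef, coeff_mk]
      by_cases hj : j < n
      · rw [if_pos hj]; exact ih j hj
      · rw [if_neg hj, mul_zero]; exact Subring.zero_mem S
    have hagree : ∀ j ≤ n - 1, PowerSeries.coeff j v = PowerSeries.coeff j vb := by
      intro j hj
      have hmk : PowerSeries.coeff j vb =
          if j < n then PowerSeries.coeff j v else 0 := by
        rw [hvbdef]; exact coeff_mk ..
      rw [hmk, if_pos (show j < n by omega)]
    -- extract the coefficient of x^(m+n) from the Böttcher equation
    have hEq := congrArg (PowerSeries.coeff (m + n)) hfB
    rw [baux_coeff_comp, baux_coeff_comp] at hEq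
    -- rewrite the left side
    have hL : ∑ k ∈ Finset.range (m + n + 1),
        PowerSeries.coeff k (φ.map (algebraMap R K)) * PowerSeries.coeff (m + n) (f ^ k) =
        PowerSeries.coeff n (v ^ m) +
          ∑ t ∈ Finset.range n, algebraMap R K (PowerSeries.coeff (m + (t + 1)) φ) *
            PowerSeries.coeff (n - t - 1) (v ^ (m + (t + 1))) := by
      rw [show m + n + 1 = m + (n + 1) by omega, Finset.sum_range_add]
      have h1 : ∑ k ∈ Finset.range m,
          PowerSeries.coeff k (φ.map (algebraMap R K)) * PowerSeries.coeff (m + n) (f ^ k)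
          = 0 := by
        refine Finset.sum_eq_zero fun k hk => ?_
        rw [PowerSeries.coeff_map, hφlow k (Finset.mem_range.mp hk), map_zero, zero_mul]
      rw [h1, zero_add, Finset.sum_range_succ']
      have h2 : PowerSeries.coeff (m + 0) (φ.map (algebraMap R K)) *
          PowerSeries.coeff (m + n) (f ^ (m + 0)) = PowerSeries.coeff n (v ^ m) := by
        rw [PowerSeries.coeff_map, Nat.add_zero, hφlead, map_one, one_mul]
        exact hpowc f v hfv (m + n) n m (by omega)
      rw [h2, add_comm]
      congr 1
      refine Finset.sum_congr rfl fun t ht => ?_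
      rw [Finset.mem_range] at ht
      rw [PowerSeries.coeff_map]
      congr 1
      exact hpowc f v hfv (m + n) (n - t - 1) (m + (t + 1)) (by omega)
    -- rewrite the right side
    have hR : ∑ k ∈ Finset.range (m + n + 1),
        PowerSeries.coeff k f * PowerSeries.coeff (m + n) ((PowerSeries.X ^ m) ^ k) =
        (if m ∣ n then PowerSeries.coeff (n / m) v else 0) := by
      have hXmk : ∀ k : ℕ, PowerSeries.coeff (m + n) ((PowerSeries.X (R := K) ^ m) ^ k) =
          if m + n = m * k then 1 else 0 := by
        intro k
        rw [← pow_mul, PowerSeries.coeff_X_pow]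
      by_cases hdvd : m ∣ n
      · obtain ⟨q, hq⟩ := hdvd
        have hq1 : 1 ≤ q := by
          rcases Nat.eq_zero_or_pos q with rfl | h
          · omega
          · exact h
        have hqle : q ≤ m * q := Nat.le_mul_of_pos_left q (by omega)
        rw [if_pos ⟨q, hq⟩]
        rw [Finset.sum_eq_single (q + 1)]
        · rw [hXmk, if_pos (by rw [hq]; ring), mul_one]
          rw [show n / m = q by rw [hq, Nat.mul_div_cancel_left q (by omega)]]
          rw [hvdef, coeff_mk]
        · intro b hb hbne
          rw [hXmk]
          rw [if_neg, mul_zero]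
          intro hcon
          apply hbne
          have : m * (q + 1) = m * b := by rw [← hcon, hq]; ring
          exact (Nat.eq_of_mul_eq_mul_left (by omega) this).symm
        · intro hnot
          exact absurd (Finset.mem_range.mpr (by omega)) hnot
      · rw [if_neg hdvd]
        refine Finset.sum_eq_zero fun k hk => ?_
        rw [hXmk]
        rw [if_neg, mul_zero]
        intro hcon
        apply hdvd
        rcases k with _ | k'
        · simp at hcon; omega
        · refine ⟨k', ?_⟩
          have : m * (k' + 1) = m * k' + m := by ring
          omega
    rw [hL, hR] at hEq
    -- split off the top coefficient of v^m
    have hsplit := baux_coeff_pow_split v hn (show 1 ≤ m by omega)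
    rw [hv0, one_pow, mul_one, ← hvbdef] at hsplit
    rw [hsplit] at hEq
    -- the main linear relation
    have hmain : (m : K) * PowerSeries.coeff n v =
        (if m ∣ n then PowerSeries.coeff (n / m) v else 0)
          - PowerSeries.coeff n (vb ^ m)
          - ∑ t ∈ Finset.range n, algebraMap R K (PowerSeries.coeff (m + (t + 1)) φ) *
              PowerSeries.coeff (n - t - 1) (v ^ (m + (t + 1))) := by
      linear_combination hEq
    -- divisibility of the right-hand side
    have piece2 : ∃ s ∈ S, (Nat.factorial n : K) * PowerSeries.coeff n (vb ^ m)
        = (m : K) * s := baux_fact_coeff_pow_div S hvb m hn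
    have piece1 : ∃ s ∈ S, (Nat.factorial n : K) *
        (if m ∣ n then PowerSeries.coeff (n / m) v else 0) = (m : K) * s := by
      by_cases hdvd : m ∣ n
      · obtain ⟨q, hq⟩ := hdvd
        have hq1 : 1 ≤ q := by
          rcases Nat.eq_zero_or_pos q with rfl | h
          · omega
          · exact h
        have h2q : 2 * q ≤ m * q := Nat.mul_le_mul_right q hm
        have hqn : q < n := by omega
        have hnm : n / m = q := by rw [hq, Nat.mul_div_cancel_left q (by omega)]
        obtain ⟨t, ht⟩ := Nat.factorial_dvd_factorial (show q ≤ n - 1 by omega)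
        have hfact : Nat.factorial n = m * (q * t * Nat.factorial q) := by
          rw [← Nat.mul_factorial_pred (by omega : n ≠ 0), ht, hq]
          ring
        refine ⟨((q * t : ℕ) : K) * ((Nat.factorial q : K) * PowerSeries.coeff q v),
          Subring.mul_mem _ (natCast_mem S _) (ih q hqn), ?_⟩
        rw [if_pos ⟨q, hq⟩, hnm, hfact]
        push_cast
        ring
      · exact ⟨0, Subring.zero_mem S, by rw [if_neg hdvd, mul_zero, mul_zero]⟩
    have piece3 : ∀ t ∈ Finset.range n, ∃ s ∈ S,
        (Nat.factorial n : K) * (algebraMap R K (PowerSeries.coeff (m + (t + 1)) φ) *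
          PowerSeries.coeff (n - t - 1) (v ^ (m + (t + 1)))) = (m : K) * s := by
      intro t ht
      rw [Finset.mem_range] at ht
      -- replace v by vb in the power
      have hrepl : PowerSeries.coeff (n - t - 1) (v ^ (m + (t + 1))) =
          PowerSeries.coeff (n - t - 1) (vb ^ (m + (t + 1))) :=
        baux_coeff_pow_congr hagree (m + (t + 1)) (n - t - 1) (by omega)
      have hs0 : (Nat.factorial (n - t - 1) : K) *
          PowerSeries.coeff (n - t - 1) (vb ^ (m + (t + 1))) ∈ S :=
        baux_fact_pow_mem S (fun j _ => hvb j) (m + (t + 1)) (n - t - 1) le_rfl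
      have hchoose : Nat.factorial n =
          n.choose (t + 1) * Nat.factorial (t + 1) * Nat.factorial (n - t - 1) := by
        rw [show n - t - 1 = n - (t + 1) by omega]
        exact (Nat.choose_mul_factorial_mul_factorial (by omega : t + 1 ≤ n)).symm
      rw [hrepl]
      by_cases hcase : t + 1 < m
      · obtain ⟨c, hc⟩ := hφdiv (t + 1) (by omega) hcase
        have hcK : ((Nat.factorial (t + 1) : K)) *
            algebraMap R K (PowerSeries.coeff (m + (t + 1)) φ) =
            (m : K) * algebraMap R K c := by
          have := congrArg (algebraMap R K) hc
          rw [map_mul, map_mul, map_natCast, map_natCast] at this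
          exact this
        refine ⟨(n.choose (t + 1) : K) * algebraMap R K c *
            ((Nat.factorial (n - t - 1) : K) *
              PowerSeries.coeff (n - t - 1) (vb ^ (m + (t + 1)))),
          Subring.mul_mem _ (Subring.mul_mem _ (natCast_mem S _) ⟨c, rfl⟩) hs0, ?_⟩
        calc (Nat.factorial n : K) *
            (algebraMap R K (PowerSeries.coeff (m + (t + 1)) φ) *
              PowerSeries.coeff (n - t - 1) (vb ^ (m + (t + 1))))
            = (n.choose (t + 1) : K) *
              ((Nat.factorial (t + 1) : K) *
                algebraMap R K (PowerSeries.coeff (m + (t + 1)) φ)) *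
              ((Nat.factorial (n - t - 1) : K) *
                PowerSeries.coeff (n - t - 1) (vb ^ (m + (t + 1)))) := by
              rw [hchoose]; push_cast; ring
          _ = _ := by rw [hcK]; ring
      · obtain ⟨d, hd⟩ := Nat.dvd_factorial (show 0 < m by omega) (show m ≤ t + 1 by omega)
        refine ⟨(n.choose (t + 1) : K) * (d : K) *
            algebraMap R K (PowerSeries.coeff (m + (t + 1)) φ) *
            ((Nat.factorial (n - t - 1) : K) *
              PowerSeries.coeff (n - t - 1) (vb ^ (m + (t + 1)))),
          Subring.mul_mem _ (Subring.mul_mem _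
            (Subring.mul_mem _ (natCast_mem S _) (natCast_mem S _))
            ⟨PowerSeries.coeff (m + (t + 1)) φ, rfl⟩) hs0, ?_⟩
        rw [hchoose, hd]
        push_cast
        ring
    -- combine
    obtain ⟨s1, hs1, he1⟩ := piece1
    obtain ⟨s2, hs2, he2⟩ := piece2
    have piece3' : ∃ s3 ∈ S, (Nat.factorial n : K) *
        (∑ t ∈ Finset.range n, algebraMap R K (PowerSeries.coeff (m + (t + 1)) φ) *
          PowerSeries.coeff (n - t - 1) (v ^ (m + (t + 1)))) = (m : K) * s3 := by
      choose w hw1 hw2 using fun (t : ℕ) (ht : t ∈ Finset.range n) => piece3 t ht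
      refine ⟨∑ t ∈ (Finset.range n).attach, w t.1 t.2,
        Subring.sum_mem _ (fun t _ => hw1 t.1 t.2), ?_⟩
      calc (Nat.factorial n : K) *
          (∑ t ∈ Finset.range n, algebraMap R K (PowerSeries.coeff (m + (t + 1)) φ) *
            PowerSeries.coeff (n - t - 1) (v ^ (m + (t + 1))))
          = ∑ t ∈ Finset.range n, (Nat.factorial n : K) *
              (algebraMap R K (PowerSeries.coeff (m + (t + 1)) φ) *
                PowerSeries.coeff (n - t - 1) (v ^ (m + (t + 1)))) := Finset.mul_sum ..
        _ = ∑ t ∈ (Finset.range n).attach, (Nat.factorial n : K) *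
              (algebraMap R K (PowerSeries.coeff (m + (t.1 + 1)) φ) *
                PowerSeries.coeff (n - t.1 - 1) (v ^ (m + (t.1 + 1)))) :=
            (Finset.sum_attach _ _).symm
        _ = ∑ t ∈ (Finset.range n).attach, (m : K) * w t.1 t.2 :=
            Finset.sum_congr rfl fun t _ => hw2 t.1 t.2
        _ = (m : K) * ∑ t ∈ (Finset.range n).attach, w t.1 t.2 := (Finset.mul_sum ..).symm
    obtain ⟨s3, hs3, he3⟩ := piece3'
    have hfinal : (m : K) * ((Nat.factorial n : K) * PowerSeries.coeff n v)
        = (m : K) * (s1 - s2 - s3) := by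
      calc (m : K) * ((Nat.factorial n : K) * PowerSeries.coeff n v)
          = (Nat.factorial n : K) * ((m : K) * PowerSeries.coeff n v) := by ring
        _ = (Nat.factorial n : K) *
            ((if m ∣ n then PowerSeries.coeff (n / m) v else 0)
              - PowerSeries.coeff n (vb ^ m)
              - ∑ t ∈ Finset.range n, algebraMap R K (PowerSeries.coeff (m + (t + 1)) φ) *
                  PowerSeries.coeff (n - t - 1) (v ^ (m + (t + 1)))) := by rw [hmain]
        _ = (m : K) * (s1 - s2 - s3) := by
            rw [mul_sub, mul_sub, he1, he2, he3]; ring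
    have := mul_left_cancel₀ hmK hfinal
    rw [this]
    exact Subring.sub_mem _ (Subring.sub_mem _ hs1 hs2) hs3
  -- Induction for g (i.e. z)
  have HZ : ∀ n, (Nat.factorial n : K) * PowerSeries.coeff n z ∈ S := by
    intro n
    induction n using Nat.strong_induction_on with
    | _ n ih =>
    rcases Nat.eq_zero_or_pos n with rfl | hn
    · rw [hz0, Nat.factorial_zero]
      simpa using Subring.one_mem S
    set zb : PowerSeries K :=
      PowerSeries.mk fun j => if j < n then PowerSeries.coeff j z else 0 with hzbdef
    have hzb : ∀ j, (Nat.factorial j : K) * PowerSeries.coeff j zb ∈ S := by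
      intro j
      rw [hzbdef, coeff_mk]
      by_cases hj : j < n
      · rw [if_pos hj]; exact ih j hj
      · rw [if_neg hj, mul_zero]; exact Subring.zero_mem S
    have hagree : ∀ j ≤ n - 1, PowerSeries.coeff j z = PowerSeries.coeff j zb := by
      intro j hj
      have hmk : PowerSeries.coeff j zb =
          if j < n then PowerSeries.coeff j z else 0 := by
        rw [hzbdef]; exact coeff_mk ..
      rw [hmk, if_pos (show j < n by omega)]
    have hEq := congrArg (PowerSeries.coeff (n + 1)) hginv
    rw [baux_coeff_comp, PowerSeries.coeff_X, if_neg (by omega),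
      Finset.sum_range_succ'] at hEq
    simp only [hf0, zero_mul, add_zero] at hEq
    rw [Finset.sum_range_succ'] at hEq
    simp only [zero_add, hf1, one_mul, pow_one] at hEq
    have hgn : PowerSeries.coeff (n + 1) g = PowerSeries.coeff n z := by
      rw [hzdef, coeff_mk]
    rw [hgn] at hEq
    have hmain : PowerSeries.coeff n z =
        - ∑ k ∈ Finset.range n, PowerSeries.coeff (k + 1 + 1) f *
            PowerSeries.coeff (n + 1) (g ^ (k + 1 + 1)) := by linear_combination hEq
    have hgoal : (Nat.factorial n : K) * PowerSeries.coeff n z =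
        - ∑ k ∈ Finset.range n, (Nat.factorial n : K) *
            (PowerSeries.coeff (k + 1 + 1) f *
              PowerSeries.coeff (n + 1) (g ^ (k + 1 + 1))) := by
      rw [hmain, mul_neg, Finset.mul_sum]
    rw [hgoal]
    refine Subring.neg_mem _ (Subring.sum_mem _ fun k hk => ?_)
    rw [Finset.mem_range] at hk
    have h1 : PowerSeries.coeff (n + 1) (g ^ (k + 1 + 1)) =
        PowerSeries.coeff (n - 1 - k) (z ^ (k + 1 + 1)) :=
      hpowc g z hgz (n + 1) (n - 1 - k) (k + 1 + 1) (by omega)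
    have h2 : PowerSeries.coeff (n - 1 - k) (z ^ (k + 1 + 1)) =
        PowerSeries.coeff (n - 1 - k) (zb ^ (k + 1 + 1)) :=
      baux_coeff_pow_congr hagree (k + 1 + 1) (n - 1 - k) (by omega)
    have h3 : PowerSeries.coeff (k + 1 + 1) f = PowerSeries.coeff (k + 1) v := by
      rw [hvdef, coeff_mk]
    have h4 : (Nat.factorial (k + 1) : K) * PowerSeries.coeff (k + 1) v ∈ S := HV (k + 1)
    have h5 : (Nat.factorial (n - 1 - k) : K) *
        PowerSeries.coeff (n - 1 - k) (zb ^ (k + 1 + 1)) ∈ S :=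
      baux_fact_pow_mem S (fun j _ => hzb j) (k + 1 + 1) (n - 1 - k) le_rfl
    have hchoose : Nat.factorial n =
        n.choose (k + 1) * Nat.factorial (k + 1) * Nat.factorial (n - 1 - k) := by
      rw [show n - 1 - k = n - (k + 1) by omega]
      exact (Nat.choose_mul_factorial_mul_factorial (by omega : k + 1 ≤ n)).symm
    rw [h1, h2, h3]
    have : (Nat.factorial n : K) *
        (PowerSeries.coeff (k + 1) v * PowerSeries.coeff (n - 1 - k) (zb ^ (k + 1 + 1))) =
        (n.choose (k + 1) : K) *
          ((Nat.factorial (k + 1) : K) * PowerSeries.coeff (k + 1) v) *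
          ((Nat.factorial (n - 1 - k) : K) *
            PowerSeries.coeff (n - 1 - k) (zb ^ (k + 1 + 1))) := by
      rw [hchoose]; push_cast; ring
    rw [this]
    exact Subring.mul_mem _ (Subring.mul_mem _ (natCast_mem S _) h4) h5
  -- Packaging
  have hfac_ne : ∀ k : ℕ, (Nat.factorial k : K) ≠ 0 := fun k =>
    Nat.cast_ne_zero.mpr (Nat.factorial_ne_zero k)
  constructor
  · have HF : ∀ k, ∃ r : R,
        algebraMap R K r = (Nat.factorial k : K) * PowerSeries.coeff (k + 1) f := by
      intro k
      have h := HV k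
      rw [hvdef, coeff_mk] at h
      exact RingHom.mem_range.mp h
    choose a ha using HF
    refine ⟨a, ?_, ?_⟩
    · apply hinj
      have h0 := ha 0
      rw [Nat.factorial_zero, Nat.cast_one, one_mul] at h0
      rw [map_one, h0]
      exact hf1
    · intro k
      rw [ha k, mul_div_cancel_left₀ _ (hfac_ne k)]
  · have HG : ∀ k, ∃ r : R,
        algebraMap R K r = (Nat.factorial k : K) * PowerSeries.coeff (k + 1) g := by
      intro k
      have h := HZ k
      rw [hzdef, coeff_mk] at h
      exact RingHom.mem_range.mp h
    choose a ha using HG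
    refine ⟨a, ?_, ?_⟩
    · apply hinj
      have h0 := ha 0
      rw [Nat.factorial_zero, Nat.cast_one, one_mul] at h0
      rw [map_one, h0]
      exact hg1
    · intro k
      rw [ha k, mul_div_cancel_left₀ _ (hfac_ne k)]

end Main
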